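/- Let (w, m, α) be a magnetic weighted graph on a nonempty finite type V and assume the graph with edge set {{v,u} : w v u > 0} is connected (any two vertices are joined by a path of pairs with positive weight). Then 0 is an eigenvalue of Δ(w,m,α) if and only if α is trivial, i.e., there exists ξ : V → ℝ such that α v u ≡ ξ(u) − ξ(v) (mod 2π) for all v, u with w v u > 0. -/

import Mathlib

/-- The magnetic weighted Laplacian `Δ(w,m,α)` as a matrix acting on `ℂ^V`:
`(Δφ)(v) = (1/m v) · Σ_u w v u · (φ(v) − exp(i·α v u)·φ(u))`. -/
noncomputable def magLap {V : Type} [Fintype V] [DecidableEq V]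
    (w : V → V → ℝ) (m : V → ℝ) (α : V → V → ℝ) : Matrix V V ℂ :=
  fun v u => (if v = u then (((∑ u', w v u') / m v : ℝ) : ℂ) else 0)
    - ((w v u / m v : ℝ) : ℂ) * Complex.exp (Complex.I * (α v u : ℝ))

/-- for a connected magnetic weighted graph, `0` is an eigenvalue
of `Δ(w,m,α)` iff the magnetic potential is trivial, i.e. there is `ξ : V → ℝ`
with `α v u ≡ ξ(u) − ξ(v) (mod 2π)` whenever `w v u > 0`. -/
theorem stmt3 {V : Type} [Fintype V] [DecidableEq V] [Nonempty V]
    (w : V → V → ℝ) (m : V → ℝ) (α : V → V → ℝ)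
    (hw_symm : ∀ v u, w v u = w u v) (hw_nonneg : ∀ v u, 0 ≤ w v u)
    (hw_diag : ∀ v, w v v = 0) (hm : ∀ v, 0 < m v)
    (hα : ∀ v u, α v u = - α u v)
    (hconn : ∀ v u : V, Relation.ReflTransGen (fun a b => 0 < w a b) v u) :
    Module.End.HasEigenvalue (Matrix.toLin' (magLap w m α)) 0 ↔
      ∃ ξ : V → ℝ, ∀ v u, 0 < w v u →
        ∃ n : ℤ, α v u = ξ u - ξ v + 2 * Real.pi * n := by
  set a : V → V → ℂ := fun v u => Complex.exp (Complex.I * (α v u : ℝ)) with ha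
  have haconj : ∀ v u, (starRingEnd ℂ) (a v u) = a u v := by
    intro v u
    simp only [ha]
    rw [← Complex.exp_conj]
    congr 1
    rw [map_mul, Complex.conj_I, Complex.conj_ofReal, hα v u]
    push_cast
    ring
  have hamul : ∀ v u, a v u * a u v = 1 := by
    intro v u
    simp only [ha]
    rw [← Complex.exp_add, hα v u]
    push_cast
    ring_nf
    exact Complex.exp_zero
  have habs : ∀ v u, ‖a v u‖ = 1 := by
    intro v u
    simp only [ha]
    rw [mul_comm, Complex.norm_exp_ofReal_mul_I]
  constructor
  · -- hard direction
    intro h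
    obtain ⟨φ, hmem, hne⟩ := h.exists_hasEigenvector
    rw [Module.End.mem_eigenspace_iff, zero_smul] at hmem
    have hmv : ∀ v, (m v : ℂ) ≠ 0 := fun v => by exact_mod_cast (hm v).ne'
    have key : ∀ v, ∑ u, (w v u : ℂ) * (a v u * φ u) = (∑ u, (w v u : ℂ)) * φ v := by
      intro v
      have h0 : (magLap w m α).mulVec φ v = 0 := by
        rw [← Matrix.toLin'_apply, hmem]; rfl
      simp only [Matrix.mulVec, dotProduct, magLap, sub_mul, ite_mul, zero_mul] at h0
      rw [Finset.sum_sub_distrib, Finset.sum_ite_eq, if_pos (Finset.mem_univ v),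
        sub_eq_zero] at h0
      have h1 : ∀ u, ((w v u / m v : ℝ) : ℂ) * Complex.exp (Complex.I * (α v u : ℝ)) * φ u
          = (m v : ℂ)⁻¹ * ((w v u : ℂ) * (a v u * φ u)) := by
        intro u
        simp only [ha]
        push_cast
        field_simp
      rw [Finset.sum_congr rfl (fun u _ => h1 u), ← Finset.mul_sum] at h0
      have h2 : (((∑ u', w v u') / m v : ℝ) : ℂ) * φ v
          = (m v : ℂ)⁻¹ * ((∑ u, (w v u : ℂ)) * φ v) := by push_cast; field_simp
      rw [h2] at h0
      exact (mul_left_cancel₀ (inv_ne_zero (hmv v)) h0.symm)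
    -- quadratic form vanishes
    have hzero : ∀ v u, 0 < w v u → φ v = a v u * φ u := by
      have expand : ∀ v u, (w v u : ℂ) *
          ((φ v - a v u * φ u) * (starRingEnd ℂ) (φ v - a v u * φ u))
          = (w v u : ℂ) * (φ v * (starRingEnd ℂ) (φ v))
            - (w v u : ℂ) * (φ v * (a u v * (starRingEnd ℂ) (φ u)))
            - (w v u : ℂ) * (a v u * φ u * (starRingEnd ℂ) (φ v))
            + (w v u : ℂ) * (φ u * (starRingEnd ℂ) (φ u)) := by
        intro v u
        simp only [map_sub, map_mul, haconj]
        linear_combination (w v u : ℂ) * (φ u * (starRingEnd ℂ) (φ u)) * hamul v u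
      have S1 : ∑ v, ∑ u, (w v u : ℂ) * (φ v * (starRingEnd ℂ) (φ v))
          = ∑ v, (∑ u, (w v u : ℂ)) * (φ v * (starRingEnd ℂ) (φ v)) := by
        refine Finset.sum_congr rfl fun v _ => ?_
        rw [Finset.sum_mul]
      have S3 : ∑ v, ∑ u, (w v u : ℂ) * (a v u * φ u * (starRingEnd ℂ) (φ v))
          = ∑ v, (∑ u, (w v u : ℂ)) * (φ v * (starRingEnd ℂ) (φ v)) := by
        refine Finset.sum_congr rfl fun v _ => ?_
        have h5 : ∀ u, (w v u : ℂ) * (a v u * φ u * (starRingEnd ℂ) (φ v))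
            = ((w v u : ℂ) * (a v u * φ u)) * (starRingEnd ℂ) (φ v) := fun u => by ring
        rw [Finset.sum_congr rfl (fun u _ => h5 u), ← Finset.sum_mul, key v]
        ring
      have S2 : ∑ v, ∑ u, (w v u : ℂ) * (φ v * (a u v * (starRingEnd ℂ) (φ u)))
          = ∑ v, (∑ u, (w v u : ℂ)) * (φ v * (starRingEnd ℂ) (φ v)) := by
        rw [Finset.sum_comm]
        refine Finset.sum_congr rfl fun u _ => ?_
        have h5 : ∀ v, (w v u : ℂ) * (φ v * (a u v * (starRingEnd ℂ) (φ u)))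
            = ((w u v : ℂ) * (a u v * φ v)) * (starRingEnd ℂ) (φ u) := fun v => by
          rw [hw_symm v u]; ring
        rw [Finset.sum_congr rfl (fun v _ => h5 v), ← Finset.sum_mul, key u]
        have h6 : ∀ v, (w u v : ℂ) = (w v u : ℂ) := fun v => by rw [hw_symm u v]
        rw [Finset.sum_congr rfl (fun v _ => h6 v)]
        ring
      have S4 : ∑ v, ∑ u, (w v u : ℂ) * (φ u * (starRingEnd ℂ) (φ u))
          = ∑ v, (∑ u, (w v u : ℂ)) * (φ v * (starRingEnd ℂ) (φ v)) := by
        rw [Finset.sum_comm]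
        refine Finset.sum_congr rfl fun u _ => ?_
        rw [← Finset.sum_mul]
        congr 1
        exact Finset.sum_congr rfl fun v _ => by rw [hw_symm v u]
      have hQC : ∑ v, ∑ u, (w v u : ℂ) *
          ((φ v - a v u * φ u) * (starRingEnd ℂ) (φ v - a v u * φ u)) = 0 := by
        have h7 : ∀ v, ∑ u, (w v u : ℂ) *
            ((φ v - a v u * φ u) * (starRingEnd ℂ) (φ v - a v u * φ u))
            = ∑ u, ((w v u : ℂ) * (φ v * (starRingEnd ℂ) (φ v))
              - (w v u : ℂ) * (φ v * (a u v * (starRingEnd ℂ) (φ u)))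
              - (w v u : ℂ) * (a v u * φ u * (starRingEnd ℂ) (φ v))
              + (w v u : ℂ) * (φ u * (starRingEnd ℂ) (φ u))) := fun v =>
          Finset.sum_congr rfl fun u _ => expand v u
        rw [Finset.sum_congr rfl fun v _ => h7 v]
        simp only [Finset.sum_add_distrib, Finset.sum_sub_distrib]
        rw [S1, S2, S3, S4]
        ring
      have hQR : ∑ v, ∑ u, w v u * Complex.normSq (φ v - a v u * φ u) = 0 := by
        have h8 : ((∑ v, ∑ u, w v u * Complex.normSq (φ v - a v u * φ u) : ℝ) : ℂ) = 0 := by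
          rw [← hQC]
          push_cast
          refine Finset.sum_congr rfl fun v _ => Finset.sum_congr rfl fun u _ => ?_
          rw [Complex.mul_conj]
        exact_mod_cast h8
      intro v u hw
      have hnonneg : ∀ x ∈ Finset.univ,
          (0:ℝ) ≤ ∑ u, w x u * Complex.normSq (φ x - a x u * φ u) :=
        fun x _ => Finset.sum_nonneg fun u _ =>
          mul_nonneg (hw_nonneg x u) (Complex.normSq_nonneg _)
      have h3 := (Finset.sum_eq_zero_iff_of_nonneg hnonneg).mp hQR v (Finset.mem_univ v)
      have h4 := (Finset.sum_eq_zero_iff_of_nonneg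
        (fun u _ => mul_nonneg (hw_nonneg v u) (Complex.normSq_nonneg _))).mp h3 u
        (Finset.mem_univ u)
      have h5 : Complex.normSq (φ v - a v u * φ u) = 0 := by
        rcases mul_eq_zero.mp h4 with h | h
        · exact absurd h hw.ne'
        · exact h
      exact sub_eq_zero.mp (Complex.normSq_eq_zero.mp h5)
    -- φ is nowhere zero
    have habseq : ∀ v u, Relation.ReflTransGen (fun a b => 0 < w a b) v u →
        ‖φ v‖ = ‖φ u‖ := by
      intro v u hrel
      induction hrel with
      | refl => rfl
      | @tail b c h1 h2 ih =>
        rw [ih, hzero b c h2, norm_mul, habs, one_mul]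
    obtain ⟨v0, hv0⟩ : ∃ v0, φ v0 ≠ 0 := by
      by_contra hc
      push_neg at hc
      exact hne (funext hc)
    have hnz : ∀ v, φ v ≠ 0 := by
      intro v
      have := habseq v0 v (hconn v0 v)
      intro h0
      rw [h0, norm_zero] at this
      exact hv0 (norm_eq_zero.mp this)
    -- construct ξ from arguments
    refine ⟨fun v => -(φ v).arg, ?_⟩
    intro v u hw
    have h1 : φ v = a v u * φ u := hzero v u hw
    have h2 : ((‖φ v‖ : ℝ) : ℂ) * Complex.exp ((φ v).arg * Complex.I) = φ v :=
      Complex.norm_mul_exp_arg_mul_I (φ v)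
    have h3 : ((‖φ u‖ : ℝ) : ℂ) * Complex.exp ((φ u).arg * Complex.I) = φ u :=
      Complex.norm_mul_exp_arg_mul_I (φ u)
    have habsvu : ‖φ v‖ = ‖φ u‖ := by
      rw [h1, norm_mul, habs, one_mul]
    have hr : ((‖φ u‖ : ℝ) : ℂ) ≠ 0 := by
      exact_mod_cast (norm_ne_zero_iff.mpr (hnz u))
    have h4 : Complex.exp ((φ v).arg * Complex.I)
        = Complex.exp (Complex.I * (α v u : ℝ) + (φ u).arg * Complex.I) := by
      rw [Complex.exp_add]
      apply mul_left_cancel₀ hr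
      calc ((‖φ u‖ : ℝ) : ℂ) * Complex.exp ((φ v).arg * Complex.I)
          = ((‖φ v‖ : ℝ) : ℂ) * Complex.exp ((φ v).arg * Complex.I) := by rw [habsvu]
        _ = φ v := h2
        _ = a v u * φ u := h1
        _ = a v u * (((‖φ u‖ : ℝ) : ℂ) * Complex.exp ((φ u).arg * Complex.I)) := by
            rw [h3]
        _ = ((‖φ u‖ : ℝ) : ℂ) *
            (Complex.exp (Complex.I * (α v u : ℝ)) * Complex.exp ((φ u).arg * Complex.I)) := by
            simp only [ha]; ring
    obtain ⟨n, hn⟩ := Complex.exp_eq_exp_iff_exists_int.mp h4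
    refine ⟨-n, ?_⟩
    have h6 := congrArg Complex.im hn
    simp [Complex.add_im, Complex.mul_im, Complex.mul_re] at h6
    push_cast
    linarith
  · -- easy direction
    rintro ⟨ξ, hξ⟩
    set φ : V → ℂ := fun v => Complex.exp (Complex.I * ((-ξ v : ℝ) : ℂ)) with hφ
    have hterm : ∀ v u, ((w v u / m v : ℝ) : ℂ) * Complex.exp (Complex.I * (α v u : ℝ)) * φ u
        = ((w v u / m v : ℝ) : ℂ) * φ v := by
      intro v u
      rcases eq_or_lt_of_le (hw_nonneg v u) with h | h
      · rw [← h]; push_cast; simp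
      · obtain ⟨n, hn⟩ := hξ v u h
        rw [mul_assoc]
        congr 1
        simp only [hφ]
        rw [← Complex.exp_add]
        rw [show Complex.I * (α v u : ℝ) + Complex.I * ((-ξ u : ℝ) : ℂ)
            = Complex.I * ((-ξ v : ℝ) : ℂ) + (n : ℂ) * (2 * (Real.pi : ℂ) * Complex.I) by
          rw [hn]; push_cast; ring]
        rw [Complex.exp_add, Complex.exp_int_mul_two_pi_mul_I, mul_one]
    have hevec : Matrix.toLin' (magLap w m α) φ = 0 := by
      funext v
      rw [Matrix.toLin'_apply]
      simp only [Matrix.mulVec, dotProduct, magLap, sub_mul, ite_mul, zero_mul]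
      rw [Finset.sum_sub_distrib, Finset.sum_ite_eq, if_pos (Finset.mem_univ v)]
      rw [Finset.sum_congr rfl (fun u _ => hterm v u)]
      rw [← Finset.sum_mul]
      have : ∑ u, ((w v u / m v : ℝ) : ℂ) = (((∑ u', w v u') / m v : ℝ) : ℂ) := by
        push_cast
        rw [Finset.sum_div]
      rw [this]
      simp [Pi.zero_apply, sub_self]
    have hφne : φ ≠ 0 := by
      intro h0
      have := congrFun h0 (Classical.arbitrary V)
      exact Complex.exp_ne_zero _ this
    exact Module.End.hasEigenvalue_of_hasEigenvector
      ⟨Module.End.mem_eigenspace_iff.mpr (by rw [hevec, zero_smul]), hφne⟩
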